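/- arXiv:1410.5160 — 2 statements merged into one kernel-verified Lean document; each statement's English description precedes it below -/
import Mathlib

section
/- Let $L$ be a field complete for a nontrivial multiplicative nonarchimedean norm, fix a real $p > 1$ and $r > 0$, and let $A$ be the ring of power series $x = \sum_{n=0}^\infty \varpi^n x_n$ over $L$ with $p^{-n}|x_n|^r \to 0$, equipped with the multiplicative norm $\lambda_r(x) = \max_n p^{-n}|x_n|^r$. Define $\deg(x)$ for nonzero $x$ to be the largest $n$ attaining the maximum in $\lambda_r(x)$. Then for nonzero $x, y \in A$, $\deg(xy) = \deg(x) + \deg(y)$. -/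
open Filter PowerSeries

/-- The decay condition defining the subring `A^r`: `p^{-n} |x_n|^r → 0`. -/
def decaysPS {L : Type*} [Field L] (ν : L → ℝ) (p r : ℝ) (x : PowerSeries L) : Prop :=
  Tendsto (fun n : ℕ => p ^ (-(n : ℝ)) * ν (PowerSeries.coeff n x) ^ r) atTop (nhds 0)

/-- The Gauss norm `λ_r(x) = sup_n p^{-n} |x_n|^r`. -/
noncomputable def gaussPS {L : Type*} [Field L] (ν : L → ℝ) (p r : ℝ)
    (x : PowerSeries L) : ℝ :=
  ⨆ n : ℕ, p ^ (-(n : ℝ)) * ν (PowerSeries.coeff n x) ^ r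

/-- `d` is the degree of `x`: the largest index attaining the maximum defining `λ_r(x)`. -/
def isDegPS {L : Type*} [Field L] (ν : L → ℝ) (p r : ℝ) (x : PowerSeries L) (d : ℕ) : Prop :=
  p ^ (-(d : ℝ)) * ν (PowerSeries.coeff d x) ^ r = gaussPS ν p r x ∧
    ∀ m : ℕ, p ^ (-(m : ℝ)) * ν (PowerSeries.coeff m x) ^ r = gaussPS ν p r x → m ≤ d

/-- Additivity of degrees: for nonzero `x, y` in the ring of decaying power series over a
complete nontrivially normed field, `deg (x*y) = deg x + deg y`. -/
theorem stmt_6 {L : Type*} [Field L] (ν : L → ℝ)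
    (hnonneg : ∀ a : L, 0 ≤ ν a)
    (hzero : ∀ a : L, ν a = 0 ↔ a = 0)
    (hmul : ∀ a b : L, ν (a * b) = ν a * ν b)
    (hadd : ∀ a b : L, ν (a + b) ≤ max (ν a) (ν b))
    (hnontriv : ∃ a : L, a ≠ 0 ∧ ν a ≠ 1)
    (hcomplete : ∀ f : ℕ → L,
      (∀ ε : ℝ, 0 < ε → ∃ N : ℕ, ∀ m ≥ N, ∀ k ≥ N, ν (f m - f k) < ε) →
      ∃ l : L, Tendsto (fun n => ν (f n - l)) atTop (nhds 0))
    (p r : ℝ) (hp : 1 < p) (hr : 0 < r)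
    (x y : PowerSeries L) (hx : decaysPS ν p r x) (hy : decaysPS ν p r y)
    (hx0 : x ≠ 0) (hy0 : y ≠ 0) (dx dy : ℕ)
    (hdx : isDegPS ν p r x dx) (hdy : isDegPS ν p r y dy) :
    isDegPS ν p r (x * y) (dx + dy) := by
  have hp0 : (0:ℝ) < p := lt_trans one_pos hp
  set F : PowerSeries L → ℕ → ℝ := fun z n => p ^ (-(n : ℝ)) * ν (PowerSeries.coeff n z) ^ r
    with hF
  have hν0 : ν 0 = 0 := (hzero 0).2 rfl
  -- basic positivity of weights
  have hFnonneg : ∀ z n, 0 ≤ F z n := fun z n =>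
    mul_nonneg (Real.rpow_nonneg hp0.le _) (Real.rpow_nonneg (hnonneg _) _)
  -- F z n ≤ gauss z  given decay
  have hbddx : BddAbove (Set.range (F x)) := hx.bddAbove_range
  have hbddy : BddAbove (Set.range (F y)) := hy.bddAbove_range
  have hFx_le : ∀ n, F x n ≤ gaussPS ν p r x := fun n => le_ciSup hbddx n
  have hFy_le : ∀ n, F y n ≤ gaussPS ν p r y := fun n => le_ciSup hbddy n
  -- positivity of gauss norms
  have hgpos : ∀ z : PowerSeries L, z ≠ 0 → BddAbove (Set.range (F z)) →
      0 < gaussPS ν p r z := by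
    intro z hz hb
    obtain ⟨n, hn⟩ : ∃ n, PowerSeries.coeff n z ≠ 0 := by
      by_contra h
      push_neg at h
      exact hz (PowerSeries.ext fun n => by simp [h n])
    have : 0 < F z n := by
      apply mul_pos (Real.rpow_pos_of_pos hp0 _)
      apply Real.rpow_pos_of_pos
      exact lt_of_le_of_ne (hnonneg _) (fun h => hn ((hzero _).1 h.symm))
    exact lt_of_lt_of_le this (le_ciSup hb n)
  have hgx : 0 < gaussPS ν p r x := hgpos x hx0 hbddx
  have hgy : 0 < gaussPS ν p r y := hgpos y hy0 hbddy
  -- strictness above degree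
  have hFx_lt : ∀ n, dx < n → F x n < gaussPS ν p r x := fun n hn =>
    lt_of_le_of_ne (hFx_le n) (fun h => absurd (hdx.2 n h) (not_le.2 hn))
  have hFy_lt : ∀ n, dy < n → F y n < gaussPS ν p r y := fun n hn =>
    lt_of_le_of_ne (hFy_le n) (fun h => absurd (hdy.2 n h) (not_le.2 hn))
  -- ultrametric sum bound
  have hsum : ∀ (s : Finset (ℕ × ℕ)) (f : ℕ × ℕ → L) (B : ℝ), 0 ≤ B →
      (∀ i ∈ s, ν (f i) ≤ B) → ν (∑ i ∈ s, f i) ≤ B := by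
    intro s f B hB h
    induction s using Finset.cons_induction with
    | empty => simpa [hν0]
    | cons a s ha ih =>
        rw [Finset.sum_cons]
        refine le_trans (hadd _ _) (max_le (h a (Finset.mem_cons_self a s)) ?_)
        exact ih fun i hi => h i (Finset.mem_cons_of_mem hi)
  -- ν (-b) = ν b
  have hν1 : ν 1 = 1 := by
    have h1 : ν 1 * ν 1 = ν 1 := by rw [← hmul]; ring_nf
    have h1ne : ν 1 ≠ 0 := fun h => one_ne_zero ((hzero 1).1 h)
    exact mul_left_cancel₀ h1ne (h1.trans (mul_one _).symm)
  have hνneg : ∀ b : L, ν (-b) = ν b := by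
    intro b
    have hm1 : ν (-1 : L) = 1 := by
      have : ν (-1 : L) * ν (-1 : L) = 1 := by rw [← hmul]; norm_num [hν1]
      nlinarith [hnonneg (-1 : L)]
    calc ν (-b) = ν ((-1) * b) := by ring_nf
    _ = ν b := by rw [hmul, hm1, one_mul]
  -- weight of a product term
  have hterm : ∀ (m i j : ℕ), i + j = m →
      p ^ (-(m:ℝ)) * ν (PowerSeries.coeff i x * PowerSeries.coeff j y) ^ r
        = F x i * F y j := by
    intro m i j hij
    rw [hmul, Real.mul_rpow (hnonneg _) (hnonneg _), ← hij]
    push_cast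
    rw [neg_add, Real.rpow_add hp0]
    ring
  -- strict bound on off-degree products
  have hoff : ∀ i j : ℕ, (dx < i ∨ dy < j) →
      F x i * F y j < gaussPS ν p r x * gaussPS ν p r y := by
    intro i j h
    rcases h with h | h
    · calc F x i * F y j ≤ F x i * gaussPS ν p r y :=
            mul_le_mul_of_nonneg_left (hFy_le j) (hFnonneg x i)
      _ < _ := mul_lt_mul_of_pos_right (hFx_lt i h) hgy
    · calc F x i * F y j ≤ gaussPS ν p r x * F y j :=
            mul_le_mul_of_nonneg_right (hFx_le i) (hFnonneg y j)
      _ < _ := mul_lt_mul_of_pos_left (hFy_lt j h) hgx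
  -- F (x*y) m ≤ max over antidiagonal, attained value form
  have hFmul_le : ∀ m : ℕ, ∃ i j : ℕ, i + j = m ∧ F (x*y) m ≤ F x i * F y j := by
    intro m
    set s := Finset.HasAntidiagonal.antidiagonal m with hs
    have hne : s.Nonempty := ⟨(0, m), by simp [hs]⟩
    set g : ℕ × ℕ → L := fun q => PowerSeries.coeff q.1 x * PowerSeries.coeff q.2 y with hg
    obtain ⟨b, hbs, hbmax⟩ := s.exists_max_image (fun q => ν (g q)) hne
    refine ⟨b.1, b.2, (Finset.HasAntidiagonal.mem_antidiagonal.1 hbs), ?_⟩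
    have hcoeff : PowerSeries.coeff m (x * y) = ∑ q ∈ s, g q := PowerSeries.coeff_mul m x y
    have hb : ν (PowerSeries.coeff m (x * y)) ≤ ν (g b) := by
      rw [hcoeff]; exact hsum s g _ (hnonneg _) hbmax
    calc F (x*y) m ≤ p ^ (-(m:ℝ)) * ν (g b) ^ r := by
          apply mul_le_mul_of_nonneg_left _ (Real.rpow_nonneg hp0.le _)
          exact Real.rpow_le_rpow (hnonneg _) hb hr.le
    _ = F x b.1 * F y b.2 := hterm m b.1 b.2 (Finset.HasAntidiagonal.mem_antidiagonal.1 hbs)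
  -- global bound
  have hFmul_bound : ∀ m : ℕ, F (x*y) m ≤ gaussPS ν p r x * gaussPS ν p r y := by
    intro m
    obtain ⟨i, j, hij, hle⟩ := hFmul_le m
    refine le_trans hle ?_
    exact mul_le_mul (hFx_le i) (hFy_le j) (hFnonneg y j) hgx.le
  -- the value at d = dx + dy is exactly λx λy
  set d := dx + dy with hd
  have hkey : F (x*y) d = gaussPS ν p r x * gaussPS ν p r y := by
    set a : L := PowerSeries.coeff dx x * PowerSeries.coeff dy y with hadef
    have haval : p ^ (-(d:ℝ)) * ν a ^ r = gaussPS ν p r x * gaussPS ν p r y := by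
      rw [hterm d dx dy rfl, show F x dx = _ from hdx.1, show F y dy = _ from hdy.1]
    have hapos : 0 < ν a := by
      rcases lt_or_eq_of_le (hnonneg a) with h | h
      · exact h
      · exfalso
        rw [← h] at haval
        rw [Real.zero_rpow hr.ne', mul_zero] at haval
        exact (mul_pos hgx hgy).ne haval
    -- every other term on the antidiagonal is strictly smaller in ν
    set s := Finset.HasAntidiagonal.antidiagonal d with hs
    set g : ℕ × ℕ → L := fun q => PowerSeries.coeff q.1 x * PowerSeries.coeff q.2 y with hg
    have hmem : (dx, dy) ∈ s := by simp [hs, hd]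
    have hlt : ∀ q ∈ s.erase (dx, dy), ν (g q) < ν a := by
      intro q hq
      have hqs := Finset.mem_of_mem_erase hq
      have hqne := Finset.ne_of_mem_erase hq
      have hqsum : q.1 + q.2 = d := Finset.HasAntidiagonal.mem_antidiagonal.1 hqs
      have hcases : dx < q.1 ∨ dy < q.2 := by
        by_contra hcon
        push_neg at hcon
        have h1 : q.1 = dx := by omega
        have h2 : q.2 = dy := by omega
        exact hqne (Prod.ext h1 h2)
      have hstrict : F x q.1 * F y q.2 < gaussPS ν p r x * gaussPS ν p r y :=
        hoff q.1 q.2 hcases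
      rw [← haval, ← hterm d q.1 q.2 hqsum] at hstrict
      have hpow : ν (g q) ^ r < ν a ^ r :=
        lt_of_mul_lt_mul_left hstrict (Real.rpow_nonneg hp0.le _)
      by_contra hcon
      push_neg at hcon
      exact absurd (Real.rpow_le_rpow (hnonneg a) hcon hr.le) (not_le.2 hpow)
    -- ν of the rest is < ν a
    have hrest : ν (∑ q ∈ s.erase (dx, dy), g q) < ν a := by
      rcases Finset.eq_empty_or_nonempty (s.erase (dx, dy)) with he | hne
      · rw [he]; simpa [hν0] using hapos
      · obtain ⟨b, hbs, hbmax⟩ := (s.erase (dx, dy)).exists_max_image (fun q => ν (g q)) hne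
        exact lt_of_le_of_lt (hsum _ g _ (hnonneg _) hbmax) (hlt b hbs)
    have hsplit : PowerSeries.coeff d (x * y) = a + ∑ q ∈ s.erase (dx, dy), g q := by
      rw [PowerSeries.coeff_mul, ← Finset.add_sum_erase s g hmem]
    have hiso : ν (PowerSeries.coeff d (x * y)) = ν a := by
      rw [hsplit]
      set t := ∑ q ∈ s.erase (dx, dy), g q with ht
      have h1 : ν (a + t) ≤ ν a := le_trans (hadd a t) (max_le le_rfl hrest.le)
      have h2 : ν a ≤ ν (a + t) := by
        have : ν a ≤ max (ν (a + t)) (ν t) := by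
          calc ν a = ν ((a + t) + (-t)) := by ring_nf
          _ ≤ max (ν (a + t)) (ν (-t)) := hadd _ _
          _ = max (ν (a + t)) (ν t) := by rw [hνneg]
        rcases le_max_iff.1 this with h | h
        · exact h
        · exact absurd h (not_le.2 hrest)
      exact le_antisymm h1 h2
    show p ^ (-(d:ℝ)) * ν (PowerSeries.coeff d (x*y)) ^ r = _
    rw [hiso, haval]
  -- gauss of product equals λx λy
  have hbddxy : BddAbove (Set.range (F (x*y))) := by
    refine ⟨gaussPS ν p r x * gaussPS ν p r y, ?_⟩
    rintro _ ⟨m, rfl⟩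
    exact hFmul_bound m
  have hgxy : gaussPS ν p r (x*y) = gaussPS ν p r x * gaussPS ν p r y := by
    refine le_antisymm (ciSup_le hFmul_bound) ?_
    rw [← hkey]
    exact le_ciSup hbddxy d
  constructor
  · show F (x*y) d = gaussPS ν p r (x*y)
    rw [hkey, hgxy]
  · intro m hm
    by_contra hcon
    push_neg at hcon
    have hm' : F (x*y) m = gaussPS ν p r x * gaussPS ν p r y := by
      rw [show F (x*y) m = _ from hm, hgxy]
    obtain ⟨i, j, hij, hle⟩ := hFmul_le m
    have : dx < i ∨ dy < j := by omega
    exact absurd (lt_of_le_of_lt (hm' ▸ hle) (hoff i j this)) (lt_irrefl _)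
end

section
/- Let $L$, $p$, $r$, $A$, $\lambda_r$, $\deg$ be as above. For all $x, y \in A$ with $x \neq 0$, there exist $z, w \in A$ with $y = zx + w$, $\lambda_r(w) \leq \lambda_r(y)$, and $\deg(w) < \deg(x)$ (with the convention $\deg(0) = -\infty$). Consequently $A$ is a Euclidean domain for $\deg$, hence a principal ideal domain. -/
open Filter PowerSeries

structure NormHyp {L : Type*} [Field L] (ν : L → ℝ) (p r : ℝ) : Prop where
  nonneg : ∀ a : L, 0 ≤ ν a
  zero : ∀ a : L, ν a = 0 ↔ a = 0
  mul : ∀ a b : L, ν (a * b) = ν a * ν b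
  add : ∀ a b : L, ν (a + b) ≤ max (ν a) (ν b)
  hp : 1 < p
  hr : 0 < r

namespace NormHyp

variable {L : Type*} [Field L] {ν : L → ℝ} {p r : ℝ} (H : NormHyp ν p r)
include H

theorem hp0 : (0:ℝ) < p := lt_trans one_pos H.hp

theorem hr0 : r ≠ 0 := ne_of_gt H.hr

theorem nu_zero : ν 0 = 0 := (H.zero 0).2 rfl

theorem nu_one : ν 1 = 1 := by
  have h := H.mul 1 1
  rw [one_mul] at h
  have h1 : ν 1 ≠ 0 := fun h0 => one_ne_zero ((H.zero 1).1 h0)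
  have h2 : ν 1 * ν 1 = ν 1 * 1 := by linarith
  exact mul_left_cancel₀ h1 h2

theorem nu_neg (a : L) : ν (-a) = ν a := by
  have hm1 : ν (-1 : L) = 1 := by
    have h := H.mul (-1) (-1)
    rw [neg_mul_neg, one_mul, H.nu_one] at h
    have h0 : 0 ≤ ν (-1 : L) := H.nonneg _
    nlinarith
  calc ν (-a) = ν ((-1) * a) := by rw [neg_one_mul]
  _ = ν (-1:L) * ν a := H.mul _ _
  _ = ν a := by rw [hm1, one_mul]

theorem nu_sub (a b : L) : ν (a - b) ≤ max (ν a) (ν b) := by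
  have := H.add a (-b)
  rwa [H.nu_neg, ← sub_eq_add_neg] at this

theorem nu_pos {a : L} (ha : a ≠ 0) : 0 < ν a :=
  lt_of_le_of_ne (H.nonneg a) (fun h => ha ((H.zero a).1 h.symm))

theorem nu_sum_le {ι : Type*} (s : Finset ι) (g : ι → L) {B : ℝ} (hB : 0 ≤ B)
    (h : ∀ i ∈ s, ν (g i) ≤ B) : ν (∑ i ∈ s, g i) ≤ B := by
  induction s using Finset.cons_induction with
  | empty => simpa [H.nu_zero] using hB
  | cons a s ha ih =>
    rw [Finset.sum_cons]
    refine le_trans (H.add _ _) (max_le (h a (Finset.mem_cons_self a s)) ?_)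
    exact ih (fun i hi => h i (Finset.mem_cons_of_mem hi))

theorem nu_sum_le_sum {ι : Type*} (s : Finset ι) (g : ι → L) :
    ν (∑ i ∈ s, g i) ≤ ∑ i ∈ s, ν (g i) := by
  induction s using Finset.cons_induction with
  | empty => simp [H.nu_zero]
  | cons a s ha ih =>
    rw [Finset.sum_cons, Finset.sum_cons]
    refine le_trans (H.add _ _) (max_le ?_ ?_)
    · have : 0 ≤ ∑ i ∈ s, ν (g i) := Finset.sum_nonneg fun i _ => H.nonneg _
      linarith
    · have : 0 ≤ ν (g a) := H.nonneg _
      linarith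

theorem nu_div (a b : L) (hb : b ≠ 0) : ν (a / b) = ν a / ν b := by
  have h := H.mul (a / b) b
  rw [div_mul_cancel₀ _ hb] at h
  field_simp [h, ne_of_gt (H.nu_pos hb)]
  exact h.symm

-- μ-level lemmas (μ a = ν a ^ r)
theorem mu_nonneg (a : L) : 0 ≤ ν a ^ r := Real.rpow_nonneg (H.nonneg a) r

theorem mu_zero_iff (a : L) : ν a ^ r = 0 ↔ a = 0 := by
  rw [Real.rpow_eq_zero (H.nonneg a) H.hr0, H.zero]

theorem mu_pos {a : L} (ha : a ≠ 0) : 0 < ν a ^ r :=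
  Real.rpow_pos_of_pos (H.nu_pos ha) r

theorem mu_mul (a b : L) : ν (a * b) ^ r = ν a ^ r * ν b ^ r := by
  rw [H.mul, Real.mul_rpow (H.nonneg a) (H.nonneg b)]

theorem mu_neg (a : L) : ν (-a) ^ r = ν a ^ r := by rw [H.nu_neg]

theorem mu_le_mu {a b : ℝ} (ha : 0 ≤ a) (hab : a ≤ b) : a ^ r ≤ b ^ r :=
  Real.rpow_le_rpow ha hab (le_of_lt H.hr)

theorem mu_sub (a b : L) : ν (a - b) ^ r ≤ max (ν a ^ r) (ν b ^ r) := by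
  rcases max_cases (ν a) (ν b) with ⟨he, _⟩ | ⟨he, _⟩ <;>
    [exact le_max_of_le_left (by rw [← he]; exact H.mu_le_mu (H.nonneg _) (H.nu_sub a b));
     exact le_max_of_le_right (by rw [← he]; exact H.mu_le_mu (H.nonneg _) (H.nu_sub a b))]

theorem mu_add (a b : L) : ν (a + b) ^ r ≤ max (ν a ^ r) (ν b ^ r) := by
  have := H.mu_sub a (-b)
  rwa [sub_neg_eq_add, H.nu_neg] at this

theorem mu_sum_le {ι : Type*} (s : Finset ι) (g : ι → L) {B : ℝ} (hB : 0 ≤ B)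
    (h : ∀ i ∈ s, ν (g i) ^ r ≤ B) : ν (∑ i ∈ s, g i) ^ r ≤ B := by
  induction s using Finset.cons_induction with
  | empty => simpa [H.nu_zero, Real.zero_rpow H.hr0] using hB
  | cons a s ha ih =>
    rw [Finset.sum_cons]
    refine le_trans (H.mu_add _ _) (max_le (h a (Finset.mem_cons_self a s)) ?_)
    exact ih (fun i hi => h i (Finset.mem_cons_of_mem hi))

theorem mu_div (a b : L) (hb : b ≠ 0) : ν (a / b) ^ r = ν a ^ r / ν b ^ r := by
  rw [H.nu_div a b hb, Real.div_rpow (H.nonneg a) (H.nonneg b)]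

-- converting between ν and μ bounds
theorem nu_lt_of_mu_lt {a : L} {ε : ℝ} (hε : 0 < ε) (h : ν a ^ r < ε ^ r) : ν a < ε := by
  by_contra hc
  push_neg at hc
  exact absurd (Real.rpow_le_rpow (le_of_lt hε) hc (le_of_lt H.hr)) (not_le.2 h)

theorem nu_le_of_mu_le {a : L} {D : ℝ} (hD : 0 ≤ D) (h : ν a ^ r ≤ D) : ν a ≤ D ^ r⁻¹ := by
  have := Real.rpow_le_rpow (H.mu_nonneg a) h (inv_nonneg.2 (le_of_lt H.hr))
  rwa [Real.rpow_rpow_inv (H.nonneg a) H.hr0] at this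

theorem mu_tendsto_of_nu {u : ℕ → L} (h : Tendsto (fun i => ν (u i)) atTop (nhds 0)) :
    Tendsto (fun i => ν (u i) ^ r) atTop (nhds 0) := by
  rw [Metric.tendsto_atTop] at h ⊢
  intro ε hε
  obtain ⟨N, hN⟩ := h (ε ^ r⁻¹) (Real.rpow_pos_of_pos hε _)
  refine ⟨N, fun n hn => ?_⟩
  have h1 := hN n hn
  rw [Real.dist_eq, sub_zero, abs_of_nonneg (H.nonneg _)] at h1
  rw [Real.dist_eq, sub_zero, abs_of_nonneg (H.mu_nonneg _)]
  calc ν (u n) ^ r < (ε ^ r⁻¹) ^ r :=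
        Real.rpow_lt_rpow (H.nonneg _) h1 H.hr
  _ = ε := Real.rpow_inv_rpow (le_of_lt hε) H.hr0

theorem nu_tendsto_of_mu {u : ℕ → L} (h : Tendsto (fun i => ν (u i) ^ r) atTop (nhds 0)) :
    Tendsto (fun i => ν (u i)) atTop (nhds 0) := by
  rw [Metric.tendsto_atTop] at h ⊢
  intro ε hε
  obtain ⟨N, hN⟩ := h (ε ^ r) (Real.rpow_pos_of_pos hε _)
  refine ⟨N, fun n hn => ?_⟩
  have h1 := hN n hn
  rw [Real.dist_eq, sub_zero, abs_of_nonneg (H.mu_nonneg _)] at h1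
  rw [Real.dist_eq, sub_zero, abs_of_nonneg (H.nonneg _)]
  exact H.nu_lt_of_mu_lt hε h1

end NormHyp

section TM
variable {L : Type*} [Field L]

/-- The `n`-th term of the Gauss norm. -/
noncomputable def tm (ν : L → ℝ) (p r : ℝ) (x : PowerSeries L) (n : ℕ) : ℝ :=
  p ^ (-(n : ℝ)) * ν (PowerSeries.coeff n x) ^ r

theorem decaysPS_iff (ν : L → ℝ) (p r : ℝ) (x : PowerSeries L) :
    decaysPS ν p r x ↔ Tendsto (tm ν p r x) atTop (nhds 0) := Iff.rfl

theorem gaussPS_eq (ν : L → ℝ) (p r : ℝ) (x : PowerSeries L) :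
    gaussPS ν p r x = ⨆ n : ℕ, tm ν p r x n := rfl

theorem isDegPS_iff (ν : L → ℝ) (p r : ℝ) (x : PowerSeries L) (d : ℕ) :
    isDegPS ν p r x d ↔ (tm ν p r x d = gaussPS ν p r x ∧
      ∀ m : ℕ, tm ν p r x m = gaussPS ν p r x → m ≤ d) := Iff.rfl

variable {ν : L → ℝ} {p r : ℝ} (H : NormHyp ν p r)
include H

theorem ppos (s : ℝ) : 0 < p ^ s := Real.rpow_pos_of_pos H.hp0 s

theorem pm_split {k j m : ℕ} (h : k + j = m) :
    p ^ (-(m : ℝ)) = p ^ (-(k : ℝ)) * p ^ (-(j : ℝ)) := by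
  rw [← Real.rpow_add H.hp0]
  congr 1
  push_cast [← h]
  ring

theorem pm_cancel (m : ℕ) : p ^ (-(m : ℝ)) * p ^ (m : ℝ) = 1 := by
  rw [← Real.rpow_add H.hp0, neg_add_cancel, Real.rpow_zero]

theorem tm_nonneg (x : PowerSeries L) (n : ℕ) : 0 ≤ tm ν p r x n :=
  mul_nonneg (le_of_lt (ppos H _)) (H.mu_nonneg _)

theorem gauss_nonneg (x : PowerSeries L) : 0 ≤ gaussPS ν p r x :=
  Real.iSup_nonneg (tm_nonneg H x)

theorem mu_le_of_tm_le {x : PowerSeries L} {n : ℕ} {B : ℝ} (h : tm ν p r x n ≤ B) :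
    ν (coeff n x) ^ r ≤ B * p ^ (n : ℝ) := by
  have h2 : tm ν p r x n * p ^ (n : ℝ) ≤ B * p ^ (n : ℝ) :=
    mul_le_mul_of_nonneg_right h (le_of_lt (ppos H _))
  calc ν (coeff n x) ^ r = p ^ (-(n:ℝ)) * p ^ (n:ℝ) * ν (coeff n x) ^ r := by
        rw [pm_cancel H, one_mul]
  _ = tm ν p r x n * p ^ (n : ℝ) := by rw [tm]; ring
  _ ≤ B * p ^ (n : ℝ) := h2

theorem tm_le_of_mu_le {x : PowerSeries L} {n : ℕ} {B : ℝ}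
    (h : ν (coeff n x) ^ r ≤ B * p ^ (n : ℝ)) : tm ν p r x n ≤ B := by
  have h2 : p ^ (-(n:ℝ)) * ν (coeff n x) ^ r ≤ p ^ (-(n:ℝ)) * (B * p ^ (n : ℝ)) :=
    mul_le_mul_of_nonneg_left h (le_of_lt (ppos H _))
  calc tm ν p r x n ≤ p ^ (-(n:ℝ)) * (B * p ^ (n : ℝ)) := h2
  _ = B * (p ^ (-(n:ℝ)) * p ^ (n:ℝ)) := by ring
  _ = B := by rw [pm_cancel H, mul_one]

omit H in theorem bddAbove_tm {x : PowerSeries L} (hx : decaysPS ν p r x) :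
    BddAbove (Set.range (tm ν p r x)) :=
  ((decaysPS_iff ν p r x).1 hx).bddAbove_range

omit H in theorem tm_le_gauss {x : PowerSeries L} (hx : decaysPS ν p r x) (n : ℕ) :
    tm ν p r x n ≤ gaussPS ν p r x :=
  le_ciSup (bddAbove_tm hx) n

omit H in theorem gauss_le {x : PowerSeries L} {B : ℝ} (hB : 0 ≤ B)
    (h : ∀ n, tm ν p r x n ≤ B) : gaussPS ν p r x ≤ B :=
  Real.iSup_le h hB

theorem gauss_pos {x : PowerSeries L} (hx : decaysPS ν p r x) (hx0 : x ≠ 0) :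
    0 < gaussPS ν p r x := by
  obtain ⟨n, hn⟩ : ∃ n, coeff n x ≠ 0 := by
    by_contra hc
    push_neg at hc
    exact hx0 (PowerSeries.ext fun n => by rw [hc n, map_zero])
  calc (0:ℝ) < tm ν p r x n := mul_pos (ppos H _) (H.mu_pos hn)
  _ ≤ gaussPS ν p r x := tm_le_gauss hx n

omit H in
/-- attainment of the sup of a nonnegative sequence tending to `0`, with a largest maximizer -/
theorem sup_attained (u : ℕ → ℝ) (hu : ∀ n, 0 ≤ u n) (h0 : Tendsto u atTop (nhds 0))
    (hpos : 0 < ⨆ n, u n) : ∃ n, u n = (⨆ n, u n) ∧ ∀ m, u m = (⨆ n, u n) → m ≤ n := by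
  classical
  set S := ⨆ n, u n with hS
  have hbdd : BddAbove (Set.range u) := h0.bddAbove_range
  have hle : ∀ n, u n ≤ S := fun n => le_ciSup hbdd n
  obtain ⟨N, hN⟩ : ∃ N, ∀ n ≥ N, u n < S := by
    have := h0.eventually_lt_const hpos
    rwa [eventually_atTop] at this
  have hex : ∃ n, u n = S := by
    by_contra hc
    push_neg at hc
    have hlt : ∀ n, u n < S := fun n => lt_of_le_of_ne (hle n) (hc n)
    obtain ⟨b, _, hb⟩ := Finset.exists_max_image (Finset.range (N+1)) u ⟨0, by simp⟩
    have hb2 : (u b + S)/2 < S := by have := hlt b; linarith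
    obtain ⟨N₂, hN₂⟩ : ∃ N₂, ∀ n ≥ N₂, u n < (u b + S)/2 := by
      have : (0:ℝ) < (u b + S)/2 := by have := hu b; linarith
      have := h0.eventually_lt_const this
      rwa [eventually_atTop] at this
    obtain ⟨b₂, _, hb₂⟩ := Finset.exists_max_image (Finset.range (N₂+1)) u ⟨0, by simp⟩
    have hub₂ : S ≤ max (u b₂) ((u b + S)/2) := by
      refine Real.iSup_le (fun n => ?_) ?_
      · rcases lt_or_ge n (N₂+1) with h | h
        · exact le_max_of_le_left (hb₂ n (Finset.mem_range.2 h))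
        · exact le_max_of_le_right (le_of_lt (hN₂ n (by omega)))
      · exact le_max_of_le_left (hu b₂)
    rcases max_cases (u b₂) ((u b + S)/2) with ⟨he, _⟩ | ⟨he, _⟩
    · rw [he] at hub₂; exact hc b₂ (le_antisymm (hle b₂) hub₂)
    · rw [he] at hub₂; linarith
  obtain ⟨n, hn⟩ := hex
  have hnN : n < N := by
    by_contra hc
    push_neg at hc
    exact absurd hn (ne_of_lt (hN n hc))
  refine ⟨Nat.findGreatest (fun m => u m = S) N, ?_, ?_⟩
  · exact Nat.findGreatest_spec (P := fun m => u m = S) (le_of_lt hnN) hn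
  · intro m hm
    rcases le_or_gt m N with h | h
    · exact Nat.le_findGreatest (P := fun m => u m = S) h hm
    · exact absurd hm (ne_of_lt (hN m (le_of_lt h)))

theorem exists_deg {x : PowerSeries L} (hx : decaysPS ν p r x) (hx0 : x ≠ 0) :
    ∃ d, isDegPS ν p r x d := by
  obtain ⟨d, h1, h2⟩ := sup_attained (tm ν p r x) (tm_nonneg H x)
    ((decaysPS_iff ν p r x).1 hx) (gauss_pos H hx hx0)
  exact ⟨d, h1, h2⟩

end TM
section Closure
variable {L : Type*} [Field L] {ν : L → ℝ} {p r : ℝ} (H : NormHyp ν p r)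
include H

theorem le_shift (m : ℕ) {A B : ℝ} (h : p ^ (-(m:ℝ)) * A ≤ B) : A ≤ B * p ^ (m:ℝ) := by
  have h2 := mul_le_mul_of_nonneg_right h (le_of_lt (ppos H (m:ℝ)))
  calc A = p ^ (-(m:ℝ)) * A * p ^ (m:ℝ) := by
        rw [mul_comm (p ^ (-(m:ℝ))) A, mul_assoc, pm_cancel H, mul_one]
  _ ≤ B * p ^ (m:ℝ) := h2

theorem le_unshift (m : ℕ) {A B : ℝ} (h : A ≤ B * p ^ (m:ℝ)) : p ^ (-(m:ℝ)) * A ≤ B := by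
  have h2 := mul_le_mul_of_nonneg_left h (le_of_lt (ppos H (-(m:ℝ))))
  calc p ^ (-(m:ℝ)) * A ≤ p ^ (-(m:ℝ)) * (B * p ^ (m:ℝ)) := h2
  _ = B * (p ^ (-(m:ℝ)) * p ^ (m:ℝ)) := by ring
  _ = B := by rw [pm_cancel H, mul_one]

theorem coeff_prod_bound (u v : PowerSeries L) (m : ℕ) {B : ℝ} (hB : 0 ≤ B)
    (s : Finset (ℕ × ℕ)) (hs : ∀ q ∈ s, q.1 + q.2 = m)
    (h : ∀ q ∈ s, tm ν p r u q.1 * tm ν p r v q.2 ≤ B) :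
    p ^ (-(m:ℝ)) * ν (∑ q ∈ s, coeff q.1 u * coeff q.2 v) ^ r ≤ B := by
  refine le_unshift H m (H.mu_sum_le s _ (mul_nonneg hB (le_of_lt (ppos H _))) ?_)
  intro q hq
  rw [H.mu_mul]
  refine le_shift H m ?_
  calc p ^ (-(m:ℝ)) * (ν (coeff q.1 u) ^ r * ν (coeff q.2 v) ^ r)
      = tm ν p r u q.1 * tm ν p r v q.2 := by
        rw [pm_split H (hs q hq), tm, tm]; ring
  _ ≤ B := h q hq

theorem tm_sub_le (x y : PowerSeries L) (n : ℕ) :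
    tm ν p r (x - y) n ≤ max (tm ν p r x n) (tm ν p r y n) := by
  have h1 : ν (coeff n (x - y)) ^ r ≤ max (ν (coeff n x) ^ r) (ν (coeff n y) ^ r) := by
    rw [map_sub]; exact H.mu_sub _ _
  calc tm ν p r (x - y) n ≤ p ^ (-(n:ℝ)) * max (ν (coeff n x) ^ r) (ν (coeff n y) ^ r) :=
        mul_le_mul_of_nonneg_left h1 (le_of_lt (ppos H _))
  _ = max (tm ν p r x n) (tm ν p r y n) := by
        rw [mul_max_of_nonneg _ _ (le_of_lt (ppos H (-(n:ℝ))))]; rfl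

theorem decays_sub {x y : PowerSeries L} (hx : decaysPS ν p r x) (hy : decaysPS ν p r y) :
    decaysPS ν p r (x - y) := by
  rw [decaysPS_iff] at hx hy ⊢
  refine squeeze_zero (tm_nonneg H _) (tm_sub_le H x y) ?_
  simpa using hx.max hy

theorem decays_mul {x y : PowerSeries L} (hx : decaysPS ν p r x) (hy : decaysPS ν p r y) :
    decaysPS ν p r (x * y) := by
  have hx' := hx
  have hy' := hy
  rw [decaysPS_iff] at hx hy ⊢
  rw [Metric.tendsto_atTop] at hx hy ⊢
  intro ε hε
  set Gx := gaussPS ν p r x + 1 with hGx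
  set Gy := gaussPS ν p r y + 1 with hGy
  have hGx0 : 0 < Gx := by have := gauss_nonneg H x; linarith
  have hGy0 : 0 < Gy := by have := gauss_nonneg H y; linarith
  have htx : ∀ n, tm ν p r x n ≤ Gx := fun n => le_trans (tm_le_gauss hx' n) (by linarith)
  have hty : ∀ n, tm ν p r y n ≤ Gy := fun n => le_trans (tm_le_gauss hy' n) (by linarith)
  obtain ⟨N₁, hN₁⟩ := hx (ε / (2 * Gy)) (by positivity)
  obtain ⟨N₂, hN₂⟩ := hy (ε / (2 * Gx)) (by positivity)
  refine ⟨N₁ + N₂, fun n hn => ?_⟩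
  rw [Real.dist_eq, sub_zero, abs_of_nonneg (tm_nonneg H _ _)]
  have key : tm ν p r (x * y) n ≤ ε / 2 := by
    show p ^ (-(n:ℝ)) * ν (coeff n (x * y)) ^ r ≤ ε / 2
    rw [PowerSeries.coeff_mul]
    refine coeff_prod_bound H x y n (by positivity) _
      (fun q hq => Finset.HasAntidiagonal.mem_antidiagonal.1 hq) (fun q hq => ?_)
    have hq' := Finset.HasAntidiagonal.mem_antidiagonal.1 hq
    rcases le_or_gt N₁ q.1 with h1 | h1
    · have := hN₁ q.1 h1
      rw [Real.dist_eq, sub_zero, abs_of_nonneg (tm_nonneg H _ _)] at this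
      calc tm ν p r x q.1 * tm ν p r y q.2 ≤ (ε / (2 * Gy)) * Gy :=
            mul_le_mul (le_of_lt this) (hty q.2) (tm_nonneg H _ _) (by positivity)
      _ = ε / 2 := by field_simp
    · have h2 : N₂ ≤ q.2 := by omega
      have := hN₂ q.2 h2
      rw [Real.dist_eq, sub_zero, abs_of_nonneg (tm_nonneg H _ _)] at this
      calc tm ν p r x q.1 * tm ν p r y q.2 ≤ Gx * (ε / (2 * Gx)) :=
            mul_le_mul (htx q.1) (le_of_lt this) (tm_nonneg H _ _) (by positivity)
      _ = ε / 2 := by field_simp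
  linarith

end Closure

section Division
variable {L : Type*} [Field L] {ν : L → ℝ} {p r : ℝ} (H : NormHyp ν p r)
include H

omit [Field L] H in theorem tendsto_shift {u : ℕ → ℝ} (a : ℕ) (h : Tendsto u atTop (nhds 0)) :
    Tendsto (fun k => u (a + k)) atTop (nhds 0) := by
  have he : (fun k => u (a + k)) = u ∘ (fun k => k + a) := funext fun k => by
    simp [Function.comp, add_comm]
  rw [he]
  exact h.comp (tendsto_add_atTop_nat a)

theorem division
    (hcomplete : ∀ f : ℕ → L,
      (∀ ε : ℝ, 0 < ε → ∃ N : ℕ, ∀ m ≥ N, ∀ k ≥ N, ν (f m - f k) < ε) →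
      ∃ l : L, Tendsto (fun n => ν (f n - l)) atTop (nhds 0))
    (x y : PowerSeries L) (hx : decaysPS ν p r x) (hy : decaysPS ν p r y) (hx0 : x ≠ 0) :
    ∃ z w : PowerSeries L, decaysPS ν p r z ∧ decaysPS ν p r w ∧
      y = z * x + w ∧ gaussPS ν p r w ≤ gaussPS ν p r y ∧
      (w = 0 ∨ ∀ dw dx : ℕ, isDegPS ν p r w dw → isDegPS ν p r x dx → dw < dx) := by
  classical
  have hΛ : 0 < gaussPS ν p r x := gauss_pos H hx hx0
  have hΛ' : gaussPS ν p r x ≠ 0 := ne_of_gt hΛ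
  obtain ⟨d, hd1, hd2⟩ : ∃ d, tm ν p r x d = gaussPS ν p r x ∧
      ∀ m, tm ν p r x m = gaussPS ν p r x → m ≤ d := exists_deg H hx hx0
  set Λ : ℝ := gaussPS ν p r x with hΛdef
  set xd : L := coeff d x with hxddef
  have hxd0 : xd ≠ 0 := by
    intro hc
    have : tm ν p r x d = 0 := by
      rw [tm, ← hxddef, hc, H.nu_zero, Real.zero_rpow H.hr0, mul_zero]
    rw [this] at hd1; exact absurd hd1.symm (ne_of_gt hΛ)
  -- the tail constant
  have htailt : Tendsto (fun k => tm ν p r x (d + 1 + k)) atTop (nhds 0) :=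
    tendsto_shift (d+1) ((decaysPS_iff ν p r x).1 hx)
  set ct : ℝ := ⨆ k, tm ν p r x (d + 1 + k) with hctdef
  have hct0 : 0 ≤ ct := Real.iSup_nonneg (fun k => tm_nonneg H _ _)
  have htail_le : ∀ j, d + 1 ≤ j → tm ν p r x j ≤ ct := by
    intro j hj
    have := le_ciSup htailt.bddAbove_range (j - (d+1))
    rwa [show d + 1 + (j - (d+1)) = j from by omega] at this
  have hctΛ : ct < Λ := by
    rcases eq_or_lt_of_le hct0 with h | h
    · rw [← h]; exact hΛ
    · obtain ⟨k, hk, -⟩ := sup_attained _ (fun k => tm_nonneg H x (d+1+k)) htailt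
        (by rw [← hctdef]; exact h)
      rw [← hctdef] at hk
      rw [← hk]
      refine lt_of_le_of_ne (tm_le_gauss hx _) (fun hc => ?_)
      have := hd2 _ hc
      omega
  set c : ℝ := ct / Λ with hcdef
  have hc0 : 0 ≤ c := div_nonneg hct0 (le_of_lt hΛ)
  have hc1 : c < 1 := (div_lt_one hΛ).2 hctΛ
  -- the iteration
  set F : PowerSeries L → PowerSeries L :=
    fun Yi => Yi - (PowerSeries.mk fun k => coeff (d+k) Yi / xd) * x with hFdef
  set Y : ℕ → PowerSeries L := fun i => F^[i] y with hYdef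
  set Z : ℕ → PowerSeries L := fun i => PowerSeries.mk fun k => coeff (d+k) (Y i) / xd
    with hZdef
  have hY0 : Y 0 = y := by rw [hYdef]; simp
  have hYs : ∀ i, Y (i+1) = Y i - Z i * x := by
    intro i
    rw [hYdef]
    simp only [Function.iterate_succ_apply']
    rfl
  have hZco : ∀ i k, coeff k (Z i) = coeff (d+k) (Y i) / xd := by
    intro i k; rw [hZdef]; simp [coeff_mk]
  have hΛeq : Λ = p ^ (-(d:ℝ)) * ν xd ^ r := by rw [← hd1, tm, ← hxddef]
  have htmZ : ∀ i k, tm ν p r (Z i) k = tm ν p r (Y i) (d+k) / Λ := by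
    intro i k
    rw [tm, hZco, H.mu_div _ _ hxd0, tm, hΛeq,
      pm_split H (show d + k = d + k from rfl)]
    have h1 : ν xd ^ r ≠ 0 := ne_of_gt (H.mu_pos hxd0)
    have h2 : p ^ (-(d:ℝ)) ≠ 0 := ne_of_gt (ppos H _)
    field_simp
  have hZdec : ∀ i, decaysPS ν p r (Y i) → decaysPS ν p r (Z i) := by
    intro i hYi
    rw [decaysPS_iff]
    have h1 : Tendsto (fun k => tm ν p r (Y i) (d + k) / Λ) atTop (nhds 0) := by
      have := (tendsto_shift d ((decaysPS_iff ν p r _).1 hYi)).div_const Λ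
      simpa using this
    exact h1.congr (fun k => (htmZ i k).symm)
  have hYdec : ∀ i, decaysPS ν p r (Y i) := by
    intro i
    induction i with
    | zero => rw [hY0]; exact hy
    | succ i ih => rw [hYs i]; exact decays_sub H ih (decays_mul H (hZdec i ih) hx)
  have hZdec' : ∀ i, decaysPS ν p r (Z i) := fun i => hZdec i (hYdec i)
  set G : ℝ := gaussPS ν p r y with hGdef
  have hG0 : 0 ≤ G := gauss_nonneg H y
  -- key one-step estimate, high indices
  have hstep : ∀ i m, d ≤ m → ∀ β γ : ℝ, 0 ≤ β → 0 ≤ γ →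
      (∀ m', d ≤ m' → tm ν p r (Y i) m' ≤ β) →
      (∀ m', m + 1 ≤ m' → tm ν p r (Y i) m' ≤ γ) →
      tm ν p r (Y (i+1)) m ≤ max (c*β) γ := by
    intro i m hm β γ hβ hγ hhigh hlow
    have hmem : ((m - d, d) : ℕ × ℕ) ∈ Finset.HasAntidiagonal.antidiagonal m :=
      Finset.HasAntidiagonal.mem_antidiagonal.2 (by omega)
    have hcoeff : coeff m (Y (i+1)) =
        -∑ q ∈ (Finset.HasAntidiagonal.antidiagonal m).erase (m-d, d), coeff q.1 (Z i) * coeff q.2 x := by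
      rw [hYs i, map_sub, PowerSeries.coeff_mul, ← Finset.sum_erase_add _ _ hmem]
      have h1 : coeff (m-d) (Z i) * coeff d x = coeff m (Y i) := by
        rw [hZco, show d + (m-d) = m from by omega, ← hxddef, div_mul_cancel₀ _ hxd0]
      rw [h1]; ring
    have hBnonneg : (0:ℝ) ≤ max (c*β) γ := le_max_of_le_right hγ
    calc tm ν p r (Y (i+1)) m
        = p ^ (-(m:ℝ)) * ν (∑ q ∈ (Finset.HasAntidiagonal.antidiagonal m).erase (m-d, d),
            coeff q.1 (Z i) * coeff q.2 x) ^ r := by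
          rw [tm, hcoeff, H.nu_neg]
    _ ≤ max (c*β) γ := by
        refine coeff_prod_bound H (Z i) x m hBnonneg _ ?_ ?_
        · intro q hq
          exact Finset.HasAntidiagonal.mem_antidiagonal.1 (Finset.mem_of_mem_erase hq)
        · intro q hq
          have hsum : q.1 + q.2 = m := Finset.HasAntidiagonal.mem_antidiagonal.1 (Finset.mem_of_mem_erase hq)
          have hqne : q ≠ (m-d, d) := Finset.ne_of_mem_erase hq
          have hq2 : q.2 ≠ d := by
            intro hc
            exact hqne (Prod.ext (by omega) hc)
          rcases lt_or_gt_of_ne hq2 with hlt | hgt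
          · -- q.2 < d : use the γ bound
            refine le_max_of_le_right ?_
            have h1 : tm ν p r (Z i) q.1 ≤ γ / Λ := by
              rw [htmZ]
              have : tm ν p r (Y i) (d + q.1) ≤ γ := hlow _ (by omega)
              gcongr
            have h2 : tm ν p r x q.2 ≤ Λ := tm_le_gauss hx q.2
            calc tm ν p r (Z i) q.1 * tm ν p r x q.2 ≤ (γ / Λ) * Λ :=
                  mul_le_mul h1 h2 (tm_nonneg H _ _) (div_nonneg hγ (le_of_lt hΛ))
            _ = γ := div_mul_cancel₀ γ hΛ'
          · -- q.2 > d : use the contraction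
            refine le_max_of_le_left ?_
            have h1 : tm ν p r (Z i) q.1 ≤ β / Λ := by
              rw [htmZ]
              have : tm ν p r (Y i) (d + q.1) ≤ β := hhigh _ (by omega)
              gcongr
            have h2 : tm ν p r x q.2 ≤ ct := htail_le q.2 (by omega)
            calc tm ν p r (Z i) q.1 * tm ν p r x q.2 ≤ (β / Λ) * ct :=
                  mul_le_mul h1 h2 (tm_nonneg H _ _) (div_nonneg hβ (le_of_lt hΛ))
            _ = c * β := by rw [hcdef]; field_simp
  -- one-step estimate, low indices
  have hlowstep : ∀ i m (β : ℝ), 0 ≤ β →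
      (∀ m', d ≤ m' → tm ν p r (Y i) m' ≤ β) →
      tm ν p r (Y (i+1)) m ≤ max (tm ν p r (Y i) m) β := by
    intro i m β hβ hhigh
    rw [hYs i]
    refine le_trans (tm_sub_le H _ _ m) (max_le_max_left _ ?_)
    show tm ν p r (Z i * x) m ≤ β
    calc tm ν p r (Z i * x) m
        = p ^ (-(m:ℝ)) * ν (∑ q ∈ Finset.HasAntidiagonal.antidiagonal m,
            coeff q.1 (Z i) * coeff q.2 x) ^ r := by rw [tm, PowerSeries.coeff_mul]
    _ ≤ β := by
        refine coeff_prod_bound H (Z i) x m hβ _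
          (fun q hq => Finset.HasAntidiagonal.mem_antidiagonal.1 hq) (fun q hq => ?_)
        have h1 : tm ν p r (Z i) q.1 ≤ β / Λ := by
          rw [htmZ]
          have : tm ν p r (Y i) (d + q.1) ≤ β := hhigh _ (by omega)
          gcongr
        have h2 : tm ν p r x q.2 ≤ Λ := tm_le_gauss hx q.2
        calc tm ν p r (Z i) q.1 * tm ν p r x q.2 ≤ (β / Λ) * Λ :=
              mul_le_mul h1 h2 (tm_nonneg H _ _) (div_nonneg hβ (le_of_lt hΛ))
        _ = β := div_mul_cancel₀ β hΛ'
  -- global bound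
  have hYG : ∀ i m, tm ν p r (Y i) m ≤ G := by
    intro i
    induction i with
    | zero => intro m; rw [hY0]; exact tm_le_gauss hy m
    | succ i ih =>
      intro m
      rcases le_or_gt d m with h | h
      · refine le_trans (hstep i m h G G hG0 hG0 (fun m' _ => ih m') (fun m' _ => ih m')) ?_
        exact max_le (mul_le_of_le_one_left hG0 (le_of_lt hc1)) le_rfl
      · refine le_trans (hlowstep i m G hG0 (fun m' _ => ih m')) (max_le (ih m) le_rfl)
  -- tail suprema
  set TY : ℕ → ℕ → ℝ := fun i m => ⨆ k, tm ν p r (Y i) (m + k) with hTYdef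
  have hTY_bdd : ∀ i m, BddAbove (Set.range (fun k => tm ν p r (Y i) (m + k))) :=
    fun i m => (tendsto_shift m ((decaysPS_iff ν p r _).1 (hYdec i))).bddAbove_range
  have htm_le_TY : ∀ i m m', m ≤ m' → tm ν p r (Y i) m' ≤ TY i m := by
    intro i m m' hmm
    have := le_ciSup (hTY_bdd i m) (m' - m)
    rwa [show m + (m' - m) = m' from by omega] at this
  have hTY_le : ∀ i m (B : ℝ), 0 ≤ B → (∀ m', m ≤ m' → tm ν p r (Y i) m' ≤ B) →
      TY i m ≤ B := by
    intro i m B hB h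
    exact Real.iSup_le (fun k => h (m + k) (by omega)) hB
  have hTY_nonneg : ∀ i m, 0 ≤ TY i m :=
    fun i m => Real.iSup_nonneg (fun k => tm_nonneg H _ _)
  have hTY_anti : ∀ i m m', m ≤ m' → TY i m' ≤ TY i m := by
    intro i m m' hmm
    exact hTY_le i m' _ (hTY_nonneg i m) (fun m'' h => htm_le_TY i m m'' (by omega))
  have hTY_tendsto : ∀ i, Tendsto (fun m => TY i m) atTop (nhds 0) := by
    intro i
    rw [Metric.tendsto_atTop]
    intro ε hε
    have h2 := (decaysPS_iff ν p r _).1 (hYdec i)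
    rw [Metric.tendsto_atTop] at h2
    obtain ⟨N, hN⟩ := h2 (ε/2) (half_pos hε)
    refine ⟨N, fun m hm => ?_⟩
    rw [Real.dist_eq, sub_zero, abs_of_nonneg (hTY_nonneg i m)]
    have : TY i m ≤ ε/2 := by
      refine hTY_le i m _ (le_of_lt (half_pos hε)) (fun m' hm' => ?_)
      have := hN m' (by omega)
      rw [Real.dist_eq, sub_zero, abs_of_nonneg (tm_nonneg H _ _)] at this
      exact le_of_lt this
    linarith
  set M : ℕ → ℝ := fun i => TY i d with hMdef
  have hM_le_G : ∀ i, M i ≤ G := fun i => hTY_le i d G hG0 (fun m' _ => hYG i m')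
  have hM_nonneg : ∀ i, 0 ≤ M i := fun i => hTY_nonneg i d
  clear_value F TY
  -- iterated contraction estimate
  have hiter : ∀ i (β : ℝ), 0 ≤ β → (∀ l, i ≤ l → M l ≤ β) →
      ∀ j m, d ≤ m → tm ν p r (Y (i+j)) m ≤ max (c*β) (TY i (m+j)) := by
    intro i β hβ hMl j
    induction j with
    | zero =>
      intro m hm
      rw [add_zero, add_zero]
      exact le_max_of_le_right (htm_le_TY i m m le_rfl)
    | succ j ih =>
      intro m hm
      have he : i + (j+1) = (i+j) + 1 := by omega
      rw [he]
      have hmax0 : (0:ℝ) ≤ max (c*β) (TY i (m+1+j)) :=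
        le_max_of_le_left (mul_nonneg hc0 hβ)
      have hhigh : ∀ m', d ≤ m' → tm ν p r (Y (i+j)) m' ≤ β := by
        intro m' hm'
        exact le_trans (htm_le_TY (i+j) d m' hm') (hMl (i+j) (by omega))
      have hlow : ∀ m', m + 1 ≤ m' →
          tm ν p r (Y (i+j)) m' ≤ max (c*β) (TY i (m+1+j)) := by
        intro m' hm'
        refine le_trans (ih m' (by omega)) (max_le_max_left _ ?_)
        exact hTY_anti i (m+1+j) (m'+j) (by omega)
      refine le_trans (hstep (i+j) m hm β _ hβ hmax0 hhigh hlow) ?_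
      rw [← max_assoc, max_self, show m+1+j = m+(j+1) from by omega]
  have hMiter : ∀ i (β : ℝ), 0 ≤ β → (∀ l, i ≤ l → M l ≤ β) →
      ∀ j, M (i+j) ≤ max (c*β) (TY i (d+j)) := by
    intro i β hβ hMl j
    refine hTY_le (i+j) d _ (le_max_of_le_left (mul_nonneg hc0 hβ)) (fun m' hm' => ?_)
    refine le_trans (hiter i β hβ hMl j m' hm') (max_le_max_left _ ?_)
    exact hTY_anti i (d+j) (m'+j) (by omega)
  -- M tends to zero
  have hkey : ∀ q : ℕ, ∀ ε : ℝ, 0 < ε → ∃ N, ∀ n ≥ N, M n ≤ c^q * G + ε := by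
    intro q
    induction q with
    | zero =>
      intro ε hε
      exact ⟨0, fun n _ => by rw [pow_zero, one_mul]; linarith [hM_le_G n]⟩
    | succ q ih =>
      intro ε hε
      obtain ⟨N, hN⟩ := ih ε hε
      have hβ : (0:ℝ) ≤ c^q * G + ε := by have := mul_nonneg (pow_nonneg hc0 q) hG0; linarith
      obtain ⟨J, hJ⟩ : ∃ J, ∀ m ≥ J, TY N m < ε := by
        have := (hTY_tendsto N).eventually_lt_const hε
        rwa [eventually_atTop] at this
      refine ⟨N + J, fun n hn => ?_⟩
      obtain ⟨j, rfl⟩ : ∃ j, n = N + j := ⟨n - N, by omega⟩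
      have h1 := hMiter N (c^q * G + ε) hβ (fun l hl => hN l hl) j
      have h2 : TY N (d+j) < ε := hJ (d+j) (by omega)
      have hce : c * ε ≤ ε := mul_le_of_le_one_left (le_of_lt hε) (le_of_lt hc1)
      have h3 : c * (c^q * G + ε) ≤ c^(q+1) * G + ε := by
        have : c * (c^q * G + ε) = c^(q+1) * G + c * ε := by ring
        linarith
      have h4 : (0:ℝ) ≤ c^(q+1) * G := mul_nonneg (pow_nonneg hc0 _) hG0
      refine le_trans h1 (max_le (by linarith) (by linarith))
  have hMtends : Tendsto M atTop (nhds 0) := by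
    rw [Metric.tendsto_atTop]
    intro ε hε
    have hcq : Tendsto (fun q => c^q * G) atTop (nhds 0) := by
      simpa using (tendsto_pow_atTop_nhds_zero_of_lt_one hc0 hc1).mul_const G
    obtain ⟨q, hq⟩ : ∃ q, c^q * G < ε/2 := by
      have := hcq.eventually_lt_const (half_pos hε)
      rw [eventually_atTop] at this
      obtain ⟨q, hq⟩ := this
      exact ⟨q, hq q le_rfl⟩
    obtain ⟨N, hN⟩ := hkey q (ε/4) (by linarith)
    refine ⟨N, fun n hn => ?_⟩
    rw [Real.dist_eq, sub_zero, abs_of_nonneg (hM_nonneg n)]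
    have := hN n hn
    linarith
  -- partial sums
  set P : ℕ → PowerSeries L := fun i => ∑ l ∈ Finset.range i, Z l with hPdef
  have hYP : ∀ i, Y i = y - P i * x := by
    intro i
    induction i with
    | zero => rw [hY0, hPdef]; simp
    | succ i ih =>
      rw [hYs i, ih, hPdef]
      simp only [Finset.sum_range_succ]
      ring
  have hPco : ∀ k i, coeff k (P i) = ∑ l ∈ Finset.range i, coeff k (Z l) := by
    intro k i; rw [hPdef]; simp
  have hZν : ∀ l k, ν (coeff k (Z l)) ^ r ≤ (M l / Λ) * p ^ (k:ℝ) := by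
    intro l k
    refine mu_le_of_tm_le H ?_
    rw [htmZ]
    have h1 : tm ν p r (Y l) (d+k) ≤ M l := htm_le_TY l d (d+k) (by omega)
    gcongr
  have hMp : ∀ k : ℕ, Tendsto (fun l => (M l / Λ) * p ^ (k:ℝ)) atTop (nhds 0) := by
    intro k
    simpa using (hMtends.div_const Λ).mul_const (p ^ (k:ℝ))
  have hcau : ∀ k : ℕ, ∃ zk : L,
      Tendsto (fun i => ν (coeff k (P i) - zk)) atTop (nhds 0) := by
    intro k
    apply hcomplete
    intro ε hε
    have hεr : 0 < ε ^ r := Real.rpow_pos_of_pos hε r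
    obtain ⟨N, hN⟩ : ∃ N, ∀ l ≥ N, (M l / Λ) * p ^ (k:ℝ) < ε ^ r / 2 := by
      have := (hMp k).eventually_lt_const (by linarith : (0:ℝ) < ε ^ r / 2)
      rwa [eventually_atTop] at this
    have aux : ∀ m' m : ℕ, N ≤ m' → m' ≤ m →
        ν (coeff k (P m) - coeff k (P m')) < ε := by
      intro m' m hNm' hm
      have hdiff : coeff k (P m) - coeff k (P m')
          = ∑ l ∈ Finset.Ico m' m, coeff k (Z l) := by
        rw [hPco, hPco, eq_comm, Finset.sum_Ico_eq_sub _ hm]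
      rw [hdiff]
      refine H.nu_lt_of_mu_lt hε (lt_of_le_of_lt
        (H.mu_sum_le _ _ (by linarith : (0:ℝ) ≤ ε ^ r / 2) ?_) (by linarith))
      intro l hl
      have hlN : N ≤ l := le_trans hNm' (Finset.mem_Ico.1 hl).1
      exact le_trans (hZν l k) (le_of_lt (hN l hlN))
    refine ⟨N, fun m hm k' hk' => ?_⟩
    rcases le_total k' m with hc | hc
    · exact aux k' m hk' hc
    · have := aux m k' hm hc
      rwa [← H.nu_neg, neg_sub] at this
  choose zc hzc using hcau
  set z : PowerSeries L := PowerSeries.mk zc with hzdef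
  set w : PowerSeries L := y - z * x with hwdef
  have hzco : ∀ k, coeff k z = zc k := by intro k; rw [hzdef]; simp
  have hTri : ∀ a b : L, ν a ≤ ν (a - b) + ν b := by
    intro a b
    have h := H.add (a - b) b
    rw [sub_add_cancel] at h
    exact h.trans (max_le_add_of_nonneg (H.nonneg _) (H.nonneg _))
  -- coefficients of w as limits of those of Y i
  have hwY : ∀ m i, coeff m w - coeff m (Y i)
      = ∑ q ∈ Finset.HasAntidiagonal.antidiagonal m, (coeff q.1 (P i) - zc q.1) * coeff q.2 x := by
    intro m i
    have h1 : w - Y i = (P i - z) * x := by rw [hwdef, hYP i]; ring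
    calc coeff m w - coeff m (Y i) = coeff m (w - Y i) := (map_sub _ _ _).symm
    _ = ∑ q ∈ Finset.HasAntidiagonal.antidiagonal m, coeff q.1 (P i - z) * coeff q.2 x := by
        rw [h1, PowerSeries.coeff_mul]
    _ = _ := Finset.sum_congr rfl fun q _ => by rw [map_sub, hzco]
  have hwYlim : ∀ m : ℕ,
      Tendsto (fun i => ν (coeff m w - coeff m (Y i))) atTop (nhds 0) := by
    intro m
    refine squeeze_zero (fun i => H.nonneg _)
      (g := fun i => ∑ q ∈ Finset.HasAntidiagonal.antidiagonal m,
        ν (coeff q.1 (P i) - zc q.1) * ν (coeff q.2 x)) (fun i => ?_) ?_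
    · rw [hwY m i]
      exact le_trans (H.nu_sum_le_sum _ _)
        (le_of_eq (Finset.sum_congr rfl fun q _ => H.mul _ _))
    · have := tendsto_finset_sum (Finset.HasAntidiagonal.antidiagonal m)
        (fun q (_ : q ∈ Finset.HasAntidiagonal.antidiagonal m) => (hzc q.1).mul_const (ν (coeff q.2 x)))
      simpa using this
  have hwcoeff0 : ∀ m, d ≤ m → coeff m w = 0 := by
    intro m hm
    have hYm0 : Tendsto (fun i => ν (coeff m (Y i))) atTop (nhds 0) := by
      refine H.nu_tendsto_of_mu (squeeze_zero (fun i => H.mu_nonneg _)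
        (g := fun i => M i * p ^ (m:ℝ)) (fun i => ?_) ?_)
      · exact mu_le_of_tm_le H (htm_le_TY i d m hm)
      · simpa using hMtends.mul_const (p ^ (m:ℝ))
    have hb : Tendsto (fun i => ν (coeff m w - coeff m (Y i)) + ν (coeff m (Y i)))
        atTop (nhds 0) := by
      simpa using (hwYlim m).add hYm0
    have h1 : ν (coeff m w) ≤ 0 := ge_of_tendsto' hb (fun i => hTri _ _)
    exact (H.zero _).1 (le_antisymm h1 (H.nonneg _))
  -- remainder norm bound
  have hwtm : ∀ m, tm ν p r w m ≤ G := by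
    intro m
    refine tm_le_of_mu_le H ?_
    have h1 : ∀ i, ν (coeff m w) ^ r
        ≤ max (ν (coeff m w - coeff m (Y i)) ^ r) (G * p ^ (m:ℝ)) := by
      intro i
      have h2 : ν (coeff m w) ^ r ≤ max (ν (coeff m w - coeff m (Y i)) ^ r)
          (ν (coeff m (Y i)) ^ r) := by
        have := H.mu_add (coeff m w - coeff m (Y i)) (coeff m (Y i))
        rwa [sub_add_cancel] at this
      exact le_trans h2 (max_le_max_left _ (mu_le_of_tm_le H (hYG i m)))
    have hmax := (H.mu_tendsto_of_nu (hwYlim m)).max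
      (tendsto_const_nhds (x := G * p ^ (m:ℝ)) (f := atTop))
    rw [max_eq_right (mul_nonneg hG0 (le_of_lt (ppos H _)))] at hmax
    exact ge_of_tendsto' hmax h1
  have hgw : gaussPS ν p r w ≤ gaussPS ν p r y := gauss_le hG0 hwtm
  -- z decays
  have hzdec : decaysPS ν p r z := by
    rw [decaysPS_iff, Metric.tendsto_atTop]
    intro ε hε
    obtain ⟨Lε, hLε⟩ : ∃ Lε, ∀ l ≥ Lε, M l / Λ < ε/2 := by
      have h0 : Tendsto (fun l => M l / Λ) atTop (nhds 0) := by
        simpa using hMtends.div_const Λ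
      have := h0.eventually_lt_const (half_pos hε)
      rwa [eventually_atTop] at this
    have hfin : ∀ᶠ k in atTop, ∀ l ∈ Finset.range Lε, tm ν p r (Z l) k < ε/2 := by
      rw [eventually_all_finset]
      intro l _
      exact ((decaysPS_iff ν p r _).1 (hZdec' l)).eventually_lt_const (half_pos hε)
    obtain ⟨K, hK⟩ := eventually_atTop.1 hfin
    refine ⟨K, fun k hk => ?_⟩
    have hall : ∀ l, tm ν p r (Z l) k ≤ ε/2 := by
      intro l
      rcases lt_or_ge l Lε with h | h
      · exact le_of_lt (hK k hk l (Finset.mem_range.2 h))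
      · refine le_trans ?_ (le_of_lt (hLε l h))
        rw [htmZ]
        have h1 : tm ν p r (Y l) (d+k) ≤ M l := htm_le_TY l d (d+k) (by omega)
        gcongr
    have hC0 : (0:ℝ) ≤ (ε/2) * p ^ (k:ℝ) := by
      have := ppos H (k:ℝ); positivity
    have hCr : (((ε/2) * p ^ (k:ℝ)) ^ r⁻¹) ^ r = (ε/2) * p ^ (k:ℝ) :=
      Real.rpow_inv_rpow hC0 H.hr0
    have hC0' : (0:ℝ) ≤ ((ε/2) * p ^ (k:ℝ)) ^ r⁻¹ := Real.rpow_nonneg hC0 _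
    have hνZ : ∀ l, ν (coeff k (Z l)) ≤ ((ε/2) * p ^ (k:ℝ)) ^ r⁻¹ :=
      fun l => H.nu_le_of_mu_le hC0 (mu_le_of_tm_le H (hall l))
    have hνP : ∀ i, ν (coeff k (P i)) ≤ ((ε/2) * p ^ (k:ℝ)) ^ r⁻¹ := by
      intro i
      rw [hPco]
      exact H.nu_sum_le _ _ hC0' (fun l _ => hνZ l)
    have hνzc : ν (zc k) ≤ ((ε/2) * p ^ (k:ℝ)) ^ r⁻¹ := by
      have h1 : Tendsto (fun i => ν (zc k - coeff k (P i))) atTop (nhds 0) := by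
        refine (hzc k).congr (fun i => ?_)
        rw [← H.nu_neg, neg_sub]
      have hb : Tendsto (fun i => ν (zc k - coeff k (P i)) + ((ε/2) * p ^ (k:ℝ)) ^ r⁻¹)
          atTop (nhds (((ε/2) * p ^ (k:ℝ)) ^ r⁻¹)) := by
        simpa using h1.add tendsto_const_nhds
      refine ge_of_tendsto' hb (fun i => le_trans (hTri (zc k) (coeff k (P i))) ?_)
      gcongr
      exact hνP i
    have htmz : tm ν p r z k ≤ ε/2 := by
      refine tm_le_of_mu_le H ?_
      rw [hzco]
      calc ν (zc k) ^ r ≤ (((ε/2) * p ^ (k:ℝ)) ^ r⁻¹) ^ r := H.mu_le_mu (H.nonneg _) hνzc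
      _ = (ε/2) * p ^ (k:ℝ) := hCr
    rw [Real.dist_eq, sub_zero, abs_of_nonneg (tm_nonneg H _ _)]
    linarith
  have hwdec : decaysPS ν p r w := by
    rw [hwdef]; exact decays_sub H hy (decays_mul H hzdec hx)
  refine ⟨z, w, hzdec, hwdec, by rw [hwdef]; ring, hgw, ?_⟩
  by_cases hw0 : w = 0
  · exact Or.inl hw0
  · refine Or.inr (fun dw dx hdw hdx => ?_)
    have hdxd : dx = d := le_antisymm (hd2 dx hdx.1) (hdx.2 d hd1)
    have hgw0 : 0 < gaussPS ν p r w := gauss_pos H hwdec hw0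
    rw [hdxd]
    by_contra hcon
    push_neg at hcon
    have h0 : coeff dw w = 0 := hwcoeff0 dw hcon
    have h2 : tm ν p r w dw = 0 := by
      rw [tm, h0, H.nu_zero, Real.zero_rpow H.hr0, mul_zero]
    have h1 : tm ν p r w dw = gaussPS ν p r w := hdw.1
    linarith

end Division

/-- Euclidean division in the ring `A` of decaying power series over a complete
nontrivially normed field: for `x ≠ 0` and any `y` there are `z, w` in `A` with
`y = z x + w`, `λ_r(w) ≤ λ_r(y)`, and `deg w < deg x` (with `deg 0 = -∞`).
Consequently `A` is a Euclidean domain for `deg`, hence a principal ideal domain. -/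
theorem stmt_8 {L : Type*} [Field L] (ν : L → ℝ)
    (hnonneg : ∀ a : L, 0 ≤ ν a)
    (hzero : ∀ a : L, ν a = 0 ↔ a = 0)
    (hmul : ∀ a b : L, ν (a * b) = ν a * ν b)
    (hadd : ∀ a b : L, ν (a + b) ≤ max (ν a) (ν b))
    (hnontriv : ∃ a : L, a ≠ 0 ∧ ν a ≠ 1)
    (hcomplete : ∀ f : ℕ → L,
      (∀ ε : ℝ, 0 < ε → ∃ N : ℕ, ∀ m ≥ N, ∀ k ≥ N, ν (f m - f k) < ε) →
      ∃ l : L, Tendsto (fun n => ν (f n - l)) atTop (nhds 0))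
    (p r : ℝ) (hp : 1 < p) (hr : 0 < r) :
    (∀ x y : PowerSeries L, decaysPS ν p r x → decaysPS ν p r y → x ≠ 0 →
      ∃ z w : PowerSeries L, decaysPS ν p r z ∧ decaysPS ν p r w ∧
        y = z * x + w ∧ gaussPS ν p r w ≤ gaussPS ν p r y ∧
        (w = 0 ∨ ∀ dw dx : ℕ, isDegPS ν p r w dw → isDegPS ν p r x dx → dw < dx)) ∧
    ∀ S : Subring (PowerSeries L), (S : Set (PowerSeries L)) = {x | decaysPS ν p r x} →
      IsPrincipalIdealRing S := by
  classical
  have H : NormHyp ν p r := ⟨hnonneg, hzero, hmul, hadd, hp, hr⟩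
  constructor
  · exact fun x y hx hy hx0 => division H hcomplete x y hx hy hx0
  · intro S hS
    constructor
    intro I
    by_cases hI : ∀ a : S, a ∈ I → a = 0
    · refine ⟨⟨0, ?_⟩⟩
      have hbot : I = ⊥ := by
        rw [eq_bot_iff]
        intro a ha
        exact (Submodule.mem_bot _).2 (hI a ha)
      rw [Submodule.span_zero_singleton]
      exact hbot
    · push_neg at hI
      obtain ⟨a, haI, ha0⟩ := hI
      have hmem : ∀ b : S, decaysPS ν p r (b : PowerSeries L) := by
        intro b
        have hb : (b : PowerSeries L) ∈ (S : Set (PowerSeries L)) := b.property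
        rw [hS] at hb
        exact hb
      have hco0 : ∀ b : S, b ≠ 0 → (b : PowerSeries L) ≠ 0 :=
        fun b hb hc => hb (Subtype.ext hc)
      have hPex : ∃ n, ∃ b : S, b ∈ I ∧ b ≠ 0 ∧ isDegPS ν p r (b : PowerSeries L) n := by
        obtain ⟨n, hn⟩ := exists_deg H (hmem a) (hco0 a ha0)
        exact ⟨n, a, haI, ha0, hn⟩
      obtain ⟨x0, hx0I, hx00, hx0deg⟩ := Nat.find_spec hPex
      refine ⟨⟨x0, le_antisymm ?_ ?_⟩⟩
      · intro b hbI
        obtain ⟨z, w, hz, hw, heq, -, hdisj⟩ :=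
          division H hcomplete (x0 : PowerSeries L) (b : PowerSeries L)
            (hmem x0) (hmem b) (hco0 x0 hx00)
        have hzS : z ∈ S := by
          rw [← SetLike.mem_coe, hS]; exact hz
        have hwS : w ∈ S := by
          rw [← SetLike.mem_coe, hS]; exact hw
        set zS : S := ⟨z, hzS⟩ with hzSdef
        set wS : S := ⟨w, hwS⟩ with hwSdef
        have heqS : b = zS * x0 + wS := Subtype.ext heq
        have hwI : wS ∈ I := by
          have h2 : wS = b - zS * x0 := by rw [heqS]; ring
          rw [h2]
          exact I.sub_mem hbI (I.mul_mem_left zS hx0I)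
        have hwz : wS = 0 := by
          by_contra hwne
          have hwne' : w ≠ 0 := fun hc => hwne (Subtype.ext hc)
          obtain ⟨dw, hdw⟩ := exists_deg H hw hwne'
          rcases hdisj with h | h
          · exact hwne' h
          · exact Nat.find_min hPex (h dw _ hdw hx0deg) ⟨wS, hwI, hwne, hdw⟩
        rw [Submodule.mem_span_singleton]
        exact ⟨zS, by rw [smul_eq_mul, heqS, hwz, add_zero]⟩
      · rw [Submodule.span_le, Set.singleton_subset_iff]
        exact hx0I
end
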